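/- Let (X, 𝒜, μ) be a probability space and let f : X → X be a measurable, measure-preserving and ergodic map. Let γ ∈ (0, 1) and let B be a measurable set with μ(B) > 1 − γ. Then there exist T ∈ ℕ and a measurable subset B° ⊆ B with μ(B°) > 1 − γ such that every x ∈ B° is (γ, T)-recurrent to B, i.e., for every natural number L > T one has #{ ℓ ∈ {0, 1, …, L} : f^ℓ(x) ∈ B } > (1 − γ)·L. -/

import Mathlib

open MeasureTheory Filter Set Topology

namespace Stmt8Aux

set_option linter.unusedSectionVars false

variable {X : Type*} [MeasurableSpace X]

/-- Birkhoff sum of `g` along the orbit of `f`. -/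
noncomputable def sg (f : X → X) (g : X → ℝ) (n : ℕ) (x : X) : ℝ :=
  ∑ ℓ ∈ Finset.range n, g (f^[ℓ] x)

/-- Maximum of the Birkhoff sums `sg f g n x` over `0 ≤ n ≤ N`. -/
noncomputable def mp (f : X → X) (g : X → ℝ) : ℕ → X → ℝ
  | 0 => fun _ => 0
  | (N+1) => fun x => max (mp f g N x) (sg f g (N+1) x)

lemma sg_zero (f : X → X) (g : X → ℝ) (x : X) : sg f g 0 x = 0 := by simp [sg]

lemma sg_succ (f : X → X) (g : X → ℝ) (n : ℕ) (x : X) :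
    sg f g (n+1) x = g x + sg f g n (f x) := by
  simp only [sg, Finset.sum_range_succ', Function.iterate_succ_apply, Function.iterate_zero_apply]
  exact add_comm _ _

lemma measurable_sg {f : X → X} {g : X → ℝ} (hf : Measurable f) (hg : Measurable g) (n : ℕ) :
    Measurable (sg f g n) :=
  Finset.measurable_sum _ fun ℓ _ => hg.comp (hf.iterate ℓ)

lemma mp_nonneg (f : X → X) (g : X → ℝ) (N : ℕ) (x : X) : 0 ≤ mp f g N x := by
  induction N with
  | zero => exact le_refl _
  | succ N ih => exact le_max_of_le_left ih

lemma sg_le_mp (f : X → X) (g : X → ℝ) {n N : ℕ} (h : n ≤ N) (x : X) :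
    sg f g n x ≤ mp f g N x := by
  induction N with
  | zero => simp [Nat.le_zero.mp h, sg_zero, mp]
  | succ N ih =>
    rcases Nat.lt_succ_iff_lt_or_eq.mp (Nat.lt_succ_of_le h) with h' | h'
    · exact le_max_of_le_left (ih (Nat.lt_succ_iff.mp h'))
    · subst h'; exact le_max_right _ _
  
lemma mp_exists (f : X → X) (g : X → ℝ) (N : ℕ) (x : X) :
    ∃ n ≤ N, mp f g N x = sg f g n x := by
  induction N with
  | zero => exact ⟨0, le_refl _, (sg_zero f g x).symm⟩
  | succ N ih =>
    obtain ⟨n, hn, he⟩ := ih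
    rcases max_cases (mp f g N x) (sg f g (N+1) x) with ⟨h1, _⟩ | ⟨h1, _⟩
    · exact ⟨n, hn.trans (Nat.le_succ N), by show max (mp f g N x) (sg f g (N+1) x) = _; rw [h1, he]⟩
    · exact ⟨N+1, le_refl _, by show max (mp f g N x) (sg f g (N+1) x) = _; rw [h1]⟩

lemma measurable_mp {f : X → X} {g : X → ℝ} (hf : Measurable f) (hg : Measurable g) (N : ℕ) :
    Measurable (mp f g N) := by
  induction N with
  | zero => exact measurable_const
  | succ N ih => exact ih.max (measurable_sg hf hg (N+1))

lemma mp_le {f : X → X} {g : X → ℝ} (hb : ∀ y, |g y| ≤ 1) (N : ℕ) (x : X) :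
    mp f g N x ≤ N := by
  obtain ⟨n, hn, he⟩ := mp_exists f g N x
  rw [he]
  calc sg f g n x ≤ ∑ ℓ ∈ Finset.range n, |g (f^[ℓ] x)| :=
        Finset.sum_le_sum fun ℓ _ => le_abs_self _
    _ ≤ ∑ _ℓ ∈ Finset.range n, (1:ℝ) := Finset.sum_le_sum fun ℓ _ => hb _
    _ = n := by simp
    _ ≤ N := Nat.cast_le.mpr hn

lemma mp_key {f : X → X} {g : X → ℝ} {N : ℕ} {x : X} (h : 0 < mp f g N x) :
    mp f g N x ≤ g x + mp f g N (f x) := by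
  obtain ⟨n, hn, he⟩ := mp_exists f g N x
  rcases n with _ | m
  · rw [he, sg_zero] at h; exact absurd h (lt_irrefl 0)
  · rw [he, sg_succ]
    exact add_le_add le_rfl (sg_le_mp f g (Nat.le_of_succ_le hn) (f x))

/-- Garsia's maximal ergodic inequality, for bounded `g`. -/
lemma maximal (μ : Measure X) [IsProbabilityMeasure μ] {f : X → X}
    (hf : MeasurePreserving f μ μ) {g : X → ℝ} (hg : Measurable g)
    (hb : ∀ y, |g y| ≤ 1) (N : ℕ) :
    0 ≤ ∫ x in {x | 0 < mp f g N x}, g x ∂μ := by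
  set E : Set X := {x | 0 < mp f g N x} with hEdef
  have hE : MeasurableSet E := measurableSet_lt measurable_const (measurable_mp hf.measurable hg N)
  have hgint : Integrable g μ := by
    refine (integrable_const (1:ℝ)).mono' hg.aestronglyMeasurable ?_
    exact Eventually.of_forall fun x => by simpa using hb x
  have hmpmeas := measurable_mp hf.measurable hg N
  have hmpint : Integrable (mp f g N) μ := by
    refine (integrable_const (N:ℝ)).mono' hmpmeas.aestronglyMeasurable ?_
    refine Eventually.of_forall fun x => ?_
    rw [Real.norm_eq_abs, abs_of_nonneg (mp_nonneg f g N x)]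
    exact mp_le hb N x
  have hmpfint : Integrable (fun x => mp f g N (f x)) μ := by
    refine (integrable_const (N:ℝ)).mono' (hmpmeas.comp hf.measurable).aestronglyMeasurable ?_
    refine Eventually.of_forall fun x => ?_
    rw [Real.norm_eq_abs, abs_of_nonneg (mp_nonneg f g N (f x))]
    exact mp_le hb N (f x)
  have step1 : ∫ x in E, (mp f g N x - mp f g N (f x)) ∂μ ≤ ∫ x in E, g x ∂μ := by
    refine setIntegral_mono_on (hmpint.sub hmpfint).integrableOn hgint.integrableOn hE ?_
    intro x hx
    have := mp_key (f := f) (g := g) (N := N) (x := x) hx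
    linarith
  have step2 : ∫ x in E, mp f g N x ∂μ = ∫ x, mp f g N x ∂μ := by
    have h0 : ∫ x in Eᶜ, mp f g N x ∂μ = 0 := by
      rw [setIntegral_congr_fun hE.compl (g := fun _ => (0:ℝ))
        (fun x hx => le_antisymm (not_lt.mp hx) (mp_nonneg f g N x))]
      simp
    rw [← integral_add_compl hE hmpint, h0, add_zero]
  have step3 : ∫ x in E, mp f g N (f x) ∂μ ≤ ∫ x, mp f g N (f x) ∂μ :=
    setIntegral_le_integral hmpfint (Eventually.of_forall fun x => mp_nonneg f g N (f x))
  have step4 : ∫ x, mp f g N (f x) ∂μ = ∫ x, mp f g N x ∂μ := by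
    rw [← integral_map hf.measurable.aemeasurable
      (by rw [hf.map_eq]; exact hmpmeas.aestronglyMeasurable), hf.map_eq]
  have hsub : ∫ x in E, (mp f g N x - mp f g N (f x)) ∂μ
      = ∫ x in E, mp f g N x ∂μ - ∫ x in E, mp f g N (f x) ∂μ :=
    integral_sub hmpint.integrableOn hmpfint.integrableOn
  linarith

/-- Orbit-count of visits to `C` among the first `n` iterates, as a real number. -/
noncomputable def cnt (f : X → X) (C : Set X) (n : ℕ) (x : X) : ℝ :=
  sg f (C.indicator fun _ => (1:ℝ)) n x

lemma ind_nonneg (C : Set X) (y : X) : 0 ≤ C.indicator (fun _ => (1:ℝ)) y :=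
  Set.indicator_nonneg (fun _ _ => zero_le_one) y

lemma cnt_succ (f : X → X) (C : Set X) (n : ℕ) (x : X) :
    cnt f C (n+1) x = C.indicator (fun _ => (1:ℝ)) x + cnt f C n (f x) :=
  sg_succ f _ n x

/-- Key measure-zero lemma: the set of points visiting `C` with upper frequency
exceeding `a > μ(C)` (in the strong, exactly invariant form) is null. -/
lemma count_small (μ : Measure X) [IsProbabilityMeasure μ] {f : X → X} (hf : Ergodic f μ)
    {C : Set X} (hC : MeasurableSet C) {a : ℝ} (ha0 : 0 < a) (ha1 : a < 1)
    (hμC : (μ C).toReal < a) :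
    μ {x | ∀ K N : ℕ, ∃ n, N ≤ n ∧ a * n + K < cnt f C n x} = 0 := by
  have hfm : Measurable f := hf.measurable
  set ind : X → ℝ := C.indicator fun _ => (1:ℝ) with hind
  have hindm : Measurable ind := measurable_const.indicator hC
  have hind0 : ∀ y, 0 ≤ ind y := ind_nonneg C
  have hind1 : ∀ y, ind y ≤ 1 := fun y => by
    by_cases h : y ∈ C <;> simp [hind, Set.indicator_apply, h]
  set g : X → ℝ := fun y => ind y - a with hg
  have hgm : Measurable g := hindm.sub measurable_const
  have hb : ∀ y, |g y| ≤ 1 := fun y => by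
    have hgy : g y = ind y - a := rfl
    have h0 := hind0 y
    have h1 := hind1 y
    rw [abs_le]
    constructor <;> linarith
  have hsg_cnt : ∀ n x, sg f g n x = cnt f C n x - n * a := by
    intro n x
    simp only [sg, cnt, hg, Finset.sum_sub_distrib, Finset.sum_const, Finset.card_range,
      nsmul_eq_mul]
    rfl
  set A : Set X := {x | ∀ K N : ℕ, ∃ n, N ≤ n ∧ a * n + K < cnt f C n x} with hA
  have hcntm : ∀ n, Measurable (cnt f C n) := fun n => measurable_sg hfm hindm n
  have hAmeas : MeasurableSet A := by
    have : A = ⋂ K : ℕ, ⋂ N : ℕ, ⋃ n : ℕ, ⋃ (_ : N ≤ n), {x | a * n + K < cnt f C n x} := by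
      ext x
      simp only [hA, Set.mem_setOf_eq, Set.mem_iInter, Set.mem_iUnion]
      exact ⟨fun h K N => (h K N).imp fun n hn => ⟨hn.1, hn.2⟩,
        fun h K N => (h K N).imp fun n hn => ⟨hn.1, hn.2⟩⟩
    rw [this]
    exact MeasurableSet.iInter fun K => MeasurableSet.iInter fun N =>
      MeasurableSet.iUnion fun n => MeasurableSet.iUnion fun _ =>
        measurableSet_lt measurable_const (hcntm n)
  have hinv : f ⁻¹' A = A := by
    ext x
    simp only [Set.mem_preimage, hA, Set.mem_setOf_eq]
    constructor
    · -- f x ∈ A → x ∈ A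
      intro h K N
      obtain ⟨n, hn, hlt⟩ := h (K+1) N
      refine ⟨n+1, hn.trans (Nat.le_succ n), ?_⟩
      have h1 : cnt f C (n+1) x = ind x + cnt f C n (f x) := cnt_succ f C n x
      have h2 := hind0 x
      push_cast at hlt ⊢
      linarith
    · -- x ∈ A → f x ∈ A
      intro h K N
      obtain ⟨n, hn, hlt⟩ := h (K+1) (N+1)
      obtain ⟨m, rfl⟩ : ∃ m, n = m + 1 := ⟨n - 1, by omega⟩
      refine ⟨m, by omega, ?_⟩
      have h1 : cnt f C (m+1) x = ind x + cnt f C m (f x) := cnt_succ f C m x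
      have h2 := hind1 x
      push_cast at hlt ⊢
      nlinarith [ha0.le]
  rcases hf.toPreErgodic.prob_eq_zero_or_one hAmeas hinv with h0 | h1
  · exact h0
  · exfalso
    set E : ℕ → Set X := fun N => {x | 0 < mp f g N x} with hE
    have hEmeas : ∀ N, MeasurableSet (E N) := fun N =>
      measurableSet_lt measurable_const (measurable_mp hfm hgm N)
    have hEmono : Monotone E := by
      intro i j hij x hx
      obtain ⟨n, hn, he⟩ := mp_exists f g i x
      exact lt_of_lt_of_le hx (he ▸ sg_le_mp f g (hn.trans hij) x)
    have hsub : A ⊆ ⋃ N, E N := by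
      intro x hx
      obtain ⟨n, _, hlt⟩ := hx 0 1
      have hsg : 0 < sg f g n x := by
        rw [hsg_cnt]
        push_cast at hlt
        linarith
      exact Set.mem_iUnion.mpr ⟨n, lt_of_lt_of_le hsg (sg_le_mp f g (le_refl n) x)⟩
    have hE1 : μ (⋃ N, E N) = 1 :=
      le_antisymm prob_le_one (h1 ▸ measure_mono hsub)
    have htd : Tendsto (fun N => μ (E N)) atTop (𝓝 1) := by
      have h := tendsto_measure_iUnion_atTop (μ := μ) hEmono
      rw [hE1] at h
      simpa [Function.comp_def] using h
    have htdR : Tendsto (fun N => (μ (E N)).toReal) atTop (𝓝 1) := by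
      have h := (ENNReal.tendsto_toReal (by simp : (1:ENNReal) ≠ ⊤)).comp htd
      simpa [Function.comp_def] using h
    have hbound : ∀ N, a * (μ (E N)).toReal ≤ (μ C).toReal := by
      intro N
      have hmax := maximal μ hf.toMeasurePreserving hgm hb N
      have hindint : Integrable ind μ := by
        refine (integrable_const (1:ℝ)).mono' hindm.aestronglyMeasurable ?_
        exact Eventually.of_forall fun y => by
          rw [Real.norm_eq_abs, abs_of_nonneg (hind0 y)]; exact hind1 y
      have hi : ∫ x in E N, g x ∂μ = (μ (E N ∩ C)).toReal - a * (μ (E N)).toReal := by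
        have h1 : ∫ x in E N, ind x ∂μ = (μ (E N ∩ C)).toReal := by
          rw [hind, setIntegral_indicator hC]
          simp [setIntegral_const, measureReal_def]
        have h2 : ∫ _x in E N, a ∂μ = a * (μ (E N)).toReal := by
          rw [setIntegral_const, smul_eq_mul, measureReal_def]; ring
        calc ∫ x in E N, g x ∂μ = ∫ x in E N, (ind x - a) ∂μ := rfl
          _ = (∫ x in E N, ind x ∂μ) - ∫ _x in E N, a ∂μ :=
              integral_sub hindint.integrableOn (integrable_const a).integrableOn
          _ = (μ (E N ∩ C)).toReal - a * (μ (E N)).toReal := by rw [h1, h2]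
      rw [hi] at hmax
      have hle : (μ (E N ∩ C)).toReal ≤ (μ C).toReal :=
        ENNReal.toReal_mono (measure_ne_top μ C) (measure_mono inter_subset_right)
      linarith
    have hfinal : a ≤ (μ C).toReal := by
      have ht2 : Tendsto (fun N => a * (μ (E N)).toReal) atTop (𝓝 (a * 1)) :=
        htdR.const_mul a
      have := le_of_tendsto ht2 (Eventually.of_forall hbound)
      linarith
    linarith

end Stmt8Aux


open Stmt8Aux in
/-- Elementary quantitative recurrence estimate: for an ergodic measure-preserving map
`f` of a probability space and a measurable set `B` with `μ(B) > 1 − γ`, there exist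
`T ∈ ℕ` and a measurable `B° ⊆ B` of measure `> 1 − γ` whose points are
`(γ, T)`-recurrent to `B`. -/
theorem stmt8 {X : Type*} [MeasurableSpace X] (μ : Measure X) [IsProbabilityMeasure μ]
    (f : X → X) (hf : Ergodic f μ)
    (γ : ℝ) (hγ : γ ∈ Set.Ioo (0:ℝ) 1)
    (B : Set X) (hBmeas : MeasurableSet B) (hμB : ENNReal.ofReal (1 - γ) < μ B) :
    ∃ (T : ℕ) (B0 : Set X), MeasurableSet B0 ∧ B0 ⊆ B ∧
      ENNReal.ofReal (1 - γ) < μ B0 ∧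
      ∀ x ∈ B0, ∀ L : ℕ, T < L →
        (1 - γ) * (L : ℝ) < (({ℓ : ℕ | ℓ ≤ L ∧ f^[ℓ] x ∈ B}).ncard : ℝ) := by
  classical
  obtain ⟨hγ0, hγ1⟩ := hγ
  have hfm : Measurable f := hf.measurable
  have hBc : MeasurableSet Bᶜ := hBmeas.compl
  -- translate the measure hypothesis to the reals
  have hμBR : 1 - γ < (μ B).toReal :=
    (ENNReal.ofReal_lt_iff_lt_toReal (by linarith) (measure_ne_top μ B)).mp hμB
  have hδ : (μ Bᶜ).toReal = 1 - (μ B).toReal := by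
    rw [measure_compl hBmeas (measure_ne_top μ B), measure_univ,
      ENNReal.toReal_sub_of_le prob_le_one ENNReal.one_ne_top, ENNReal.toReal_one]
  have hδ0 : 0 ≤ (μ Bᶜ).toReal := ENNReal.toReal_nonneg
  have hδγ : (μ Bᶜ).toReal < γ := by rw [hδ]; linarith
  set a : ℝ := ((μ Bᶜ).toReal + γ) / 2 with ha
  have ha0 : 0 < a := by rw [ha]; linarith
  have haγ : a < γ := by rw [ha]; linarith
  have hδa : (μ Bᶜ).toReal < a := by rw [ha]; linarith
  have ha1 : a < 1 := lt_trans haγ hγ1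
  have hzero := count_small μ hf hBc ha0 ha1 hδa
  set ind : X → ℝ := Bᶜ.indicator fun _ => (1:ℝ) with hind
  have hindm : Measurable ind := measurable_const.indicator hBc
  have hcntm : ∀ n, Measurable (cnt f Bᶜ n) := fun n => measurable_sg hfm hindm n
  -- the good sets
  set G : ℕ → Set X := fun T => {x | ∀ L : ℕ, T < L → cnt f Bᶜ (L+1) x < γ * L + 1} with hG
  have hGmeas : ∀ T, MeasurableSet (G T) := by
    intro T
    have : G T = ⋂ L : ℕ, ⋂ (_ : T < L), {x | cnt f Bᶜ (L+1) x < γ * L + 1} := by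
      ext x
      simp only [hG, Set.mem_setOf_eq, Set.mem_iInter]
    rw [this]
    exact MeasurableSet.iInter fun L => MeasurableSet.iInter fun _ =>
      measurableSet_lt (hcntm (L+1)) measurable_const
  have hGmono : Monotone G := fun i j hij x hx L hL => hx L (lt_of_le_of_lt hij hL)
  -- the complement of the union of the good sets is contained in the null set
  have hcover : (⋃ T, G T)ᶜ ⊆ {x | ∀ K N : ℕ, ∃ n, N ≤ n ∧ a * n + K < cnt f Bᶜ n x} := by
    intro x hx
    simp only [Set.mem_compl_iff, Set.mem_iUnion, not_exists] at hx
    by_contra hxA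
    simp only [Set.mem_setOf_eq, not_forall, not_exists, not_and, not_lt] at hxA
    obtain ⟨K, N, hKN⟩ := hxA
    set T : ℕ := max N (⌈(a + K) / (γ - a)⌉₊) with hT
    refine hx T fun L hL => ?_
    have hLN : N ≤ L + 1 := le_trans (le_trans (le_max_left _ _) (le_of_lt hL)) (Nat.le_succ L)
    have h1 := hKN (L+1) hLN
    have hLc : (a + K) / (γ - a) ≤ (L : ℝ) := by
      calc (a + K) / (γ - a) ≤ (⌈(a + K) / (γ - a)⌉₊ : ℝ) := Nat.le_ceil _
        _ ≤ (T : ℝ) := Nat.cast_le.mpr (le_max_right _ _)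
        _ ≤ (L : ℝ) := Nat.cast_le.mpr (le_of_lt hL)
    have hga : 0 < γ - a := by linarith
    have h2 : a + (K : ℝ) ≤ (γ - a) * L := by
      rw [div_le_iff₀ hga] at hLc
      linarith
    push_cast at h1 ⊢
    nlinarith
  have hnull : μ ((⋃ T, G T)ᶜ) = 0 := measure_mono_null hcover hzero
  have hμU : μ (⋃ T, G T) = 1 := by
    rwa [prob_compl_eq_zero_iff (MeasurableSet.iUnion hGmeas)] at hnull
  -- B ∩ G T increases to something of measure μ B
  have hμBU : μ (B ∩ ⋃ T, G T) = μ B := by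
    refine le_antisymm (measure_mono inter_subset_left) ?_
    have hsub : B ⊆ (B ∩ ⋃ T, G T) ∪ (⋃ T, G T)ᶜ := by
      intro x hx
      by_cases hxu : x ∈ ⋃ T, G T
      · exact Or.inl ⟨hx, hxu⟩
      · exact Or.inr hxu
    calc μ B ≤ μ ((B ∩ ⋃ T, G T) ∪ (⋃ T, G T)ᶜ) := measure_mono hsub
      _ ≤ μ (B ∩ ⋃ T, G T) + μ ((⋃ T, G T)ᶜ) := measure_union_le _ _
      _ = μ (B ∩ ⋃ T, G T) := by rw [hnull, add_zero]
  have htendsto : Tendsto (fun T => μ (B ∩ G T)) atTop (𝓝 (μ B)) := by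
    have h := tendsto_measure_iUnion_atTop (μ := μ)
      (fun i j hij => inter_subset_inter_right B (hGmono hij))
    rw [← Set.inter_iUnion, hμBU] at h
    simpa [Function.comp_def] using h
  obtain ⟨T, hT⟩ := (htendsto.eventually (eventually_gt_nhds hμB)).exists
  refine ⟨T, B ∩ G T, hBmeas.inter (hGmeas T), inter_subset_left, hT, ?_⟩
  intro x hx L hL
  have hx2 : cnt f Bᶜ (L+1) x < γ * L + 1 := hx.2 L hL
  -- identify the orbit set with a finset and count
  have hset : {ℓ : ℕ | ℓ ≤ L ∧ f^[ℓ] x ∈ B}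
      = ↑((Finset.range (L+1)).filter fun ℓ => f^[ℓ] x ∈ B) := by
    ext ℓ
    simp [Nat.lt_succ_iff]
  rw [hset, Set.ncard_coe_finset]
  have hcard : ((Finset.range (L+1)).filter fun ℓ => f^[ℓ] x ∈ B).card
      + ((Finset.range (L+1)).filter fun ℓ => ¬ (f^[ℓ] x ∈ B)).card = L + 1 := by
    rw [Finset.card_filter_add_card_filter_not, Finset.card_range]
  have hcnt : cnt f Bᶜ (L+1) x
      = (((Finset.range (L+1)).filter fun ℓ => ¬ (f^[ℓ] x ∈ B)).card : ℝ) := by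
    rw [cnt]
    simp only [sg, Set.indicator_apply, Set.mem_compl_iff]
    rw [Finset.sum_boole]
  have hcast : (((Finset.range (L+1)).filter fun ℓ => f^[ℓ] x ∈ B).card : ℝ)
      = (L + 1 : ℝ) - cnt f Bᶜ (L+1) x := by
    rw [hcnt]
    have hR : (((Finset.range (L+1)).filter fun ℓ => f^[ℓ] x ∈ B).card : ℝ)
        + (((Finset.range (L+1)).filter fun ℓ => ¬ (f^[ℓ] x ∈ B)).card : ℝ) = (L : ℝ) + 1 := by
      exact_mod_cast hcard
    linarith
  rw [hcast]
  nlinarith
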